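/- arXiv:2212.04187 — 2 statements merged into one kernel-verified Lean document; each statement's English description precedes it below -/
import Mathlib

section
/- Assume the non-parallel condition (NP): A e_i ≠ η A e_j for all indices i ≠ j and all η ∈ ℝ. Let J ⊆ {1,…,n} be a set of indices such that e_j lies in the orthogonal complement of ker(A) for every j ∈ J, and let j̃ ∉ J. Let x* = Σ_{j∈J} x*_j e_j + x*_{j̃} e_{j̃}, where all coefficients x*_j (j ∈ J) and x*_{j̃} are nonzero. Then x* is the unique minimizer of the weighted ℓ1 norm ‖W x‖₁ = Σ_{i=1}^n w_i |x_i| over all x ∈ ℝⁿ satisfying A x = A x*. -/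
open scoped RealInnerProductSpace Classical

/-- The `i`-th standard basis vector of `ℝⁿ`. -/
noncomputable def stdBasis (n : ℕ) (i : Fin n) : EuclideanSpace ℝ (Fin n) :=
  EuclideanSpace.single i 1

/-- `P`: the orthogonal projection of `ℝⁿ` onto the orthogonal complement of `ker A`
(this equals `A†A` for the Moore–Penrose pseudoinverse `A†`). -/
noncomputable def proj {m n : ℕ} (A : EuclideanSpace ℝ (Fin n) →ₗ[ℝ] EuclideanSpace ℝ (Fin m))
    (x : EuclideanSpace ℝ (Fin n)) : EuclideanSpace ℝ (Fin n) :=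
  (Submodule.orthogonalProjection (LinearMap.ker A)ᗮ x : EuclideanSpace ℝ (Fin n))

/-- The weights `w i = ‖P e_i‖₂`. -/
noncomputable def wgt {m n : ℕ} (A : EuclideanSpace ℝ (Fin n) →ₗ[ℝ] EuclideanSpace ℝ (Fin m))
    (i : Fin n) : ℝ :=
  ‖proj A (stdBasis n i)‖

/-- The weighted ℓ¹ norm `‖W x‖₁ = ∑ i, w i * |x i|`. -/
noncomputable def wl1 {m n : ℕ} (A : EuclideanSpace ℝ (Fin n) →ₗ[ℝ] EuclideanSpace ℝ (Fin m))
    (x : EuclideanSpace ℝ (Fin n)) : ℝ :=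
  ∑ i, wgt A i * |x i|

section helpers
variable {m n : ℕ} (A : EuclideanSpace ℝ (Fin n) →ₗ[ℝ] EuclideanSpace ℝ (Fin m))

lemma proj_ker {v : EuclideanSpace ℝ (Fin n)} (hv : v ∈ LinearMap.ker A) : proj A v = 0 := by
  unfold proj
  rw [Submodule.orthogonalProjectionOnto_apply_of_mem_orthogonal (Submodule.le_orthogonal_orthogonal _ hv)]
  simp

lemma sub_proj_mem_ker (x : EuclideanSpace ℝ (Fin n)) : x - proj A x ∈ LinearMap.ker A := by
  have h : x - proj A x ∈ (LinearMap.ker A)ᗮᗮ :=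
    Submodule.sub_starProjection_mem_orthogonal (K := (LinearMap.ker A)ᗮ) x
  rwa [Submodule.orthogonal_orthogonal] at h

lemma A_proj (x : EuclideanSpace ℝ (Fin n)) : A (proj A x) = A x := by
  have h := sub_proj_mem_ker A x
  rw [LinearMap.mem_ker, map_sub, sub_eq_zero] at h
  exact h.symm

lemma wgt_pos (hA : ∀ i, stdBasis n i ∉ LinearMap.ker A) (i : Fin n) : 0 < wgt A i := by
  rw [wgt, norm_pos_iff]
  intro h
  apply hA i
  have : Submodule.orthogonalProjection (LinearMap.ker A)ᗮ (stdBasis n i) = 0 := by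
    ext1; exact h
  rw [Submodule.orthogonalProjectionOnto_eq_zero_iff, Submodule.orthogonal_orthogonal] at this
  exact this

lemma proj_sum (x : EuclideanSpace ℝ (Fin n)) :
    proj A x = ∑ i, x i • proj A (stdBasis n i) := by
  have hx : x = ∑ i, x i • stdBasis n i := by
    ext j
    rw [WithLp.ofLp_sum, Finset.sum_apply]
    simp [stdBasis, EuclideanSpace.single_apply]
  conv_lhs => rw [hx]
  unfold proj
  rw [map_sum]
  push_cast
  simp [map_smul]

lemma ker_coord_zero {v : EuclideanSpace ℝ (Fin n)} (hv : v ∈ LinearMap.ker A)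
    {j : Fin n} (hj : stdBasis n j ∈ (LinearMap.ker A)ᗮ) : v j = 0 := by
  have := (Submodule.mem_orthogonal _ _).mp hj v hv
  rw [stdBasis] at this
  simpa [EuclideanSpace.inner_single_right] using this

lemma sameRay_of_norm_sum_eq {E : Type*} [NormedAddCommGroup E] [InnerProductSpace ℝ E]
    {ι : Type*} [DecidableEq ι] {s : Finset ι} {f : ι → E}
    (h : ‖∑ i ∈ s, f i‖ = ∑ i ∈ s, ‖f i‖) {i : ι} (hi : i ∈ s) :
    SameRay ℝ (f i) (∑ j ∈ s, f j) := by
  set t := ∑ j ∈ s.erase i, f j with ht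
  have hsum : f i + t = ∑ j ∈ s, f j := Finset.add_sum_erase s f hi
  have h1 : ‖f i + t‖ = ‖f i‖ + ‖t‖ := by
    have hle : ‖t‖ ≤ ∑ j ∈ s.erase i, ‖f j‖ := norm_sum_le _ _
    have h2 : ‖f i‖ + ∑ j ∈ s.erase i, ‖f j‖ = ∑ j ∈ s, ‖f j‖ :=
      Finset.add_sum_erase s (fun j => ‖f j‖) hi
    have h3 : ‖f i + t‖ ≤ ‖f i‖ + ‖t‖ := norm_add_le _ _
    rw [hsum, h] at *
    linarith
  have hr : SameRay ℝ (f i) t := sameRay_iff_norm_add.mpr h1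
  rw [← hsum]
  exact (SameRay.refl (f i)).add_right hr

end helpers

theorem stmt3 {m n : ℕ}
    (A : EuclideanSpace ℝ (Fin n) →ₗ[ℝ] EuclideanSpace ℝ (Fin m))
    (hA : ∀ i, stdBasis n i ∉ LinearMap.ker A)
    (hNP : ∀ i j : Fin n, i ≠ j → ∀ η : ℝ, A (stdBasis n i) ≠ η • A (stdBasis n j))
    (J : Finset (Fin n)) (jt : Fin n) (hjt : jt ∉ J)
    (hJperp : ∀ j ∈ J, stdBasis n j ∈ (LinearMap.ker A)ᗮ)
    (coef : Fin n → ℝ) (hcoef : ∀ j ∈ J, coef j ≠ 0) (hcoefjt : coef jt ≠ 0)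
    (xstar : EuclideanSpace ℝ (Fin n))
    (hx : xstar = (∑ j ∈ J, coef j • stdBasis n j) + coef jt • stdBasis n jt) :
    (∀ x : EuclideanSpace ℝ (Fin n), A x = A xstar → wl1 A xstar ≤ wl1 A x) ∧
      ∀ y : EuclideanSpace ℝ (Fin n), A y = A xstar →
        (∀ x : EuclideanSpace ℝ (Fin n), A x = A xstar → wl1 A y ≤ wl1 A x) → y = xstar := by
  have hw : ∀ i, 0 < wgt A i := wgt_pos A hA
  -- coordinates of xstar
  have hxs : ∀ i, xstar i = if i ∈ J then coef i else if i = jt then coef jt else 0 := by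
    intro i
    rw [hx]
    have h1 : ((∑ j ∈ J, coef j • stdBasis n j) + coef jt • stdBasis n jt) i
        = (∑ j ∈ J, coef j • stdBasis n j) i + (coef jt • stdBasis n jt) i := rfl
    rw [h1, WithLp.ofLp_sum, Finset.sum_apply]
    simp only [stdBasis, PiLp.smul_apply, EuclideanSpace.single_apply, smul_eq_mul,
      mul_ite, mul_one, mul_zero]
    rw [Finset.sum_ite_eq J i coef]
    by_cases hiJ : i ∈ J
    · have : i ≠ jt := fun h => hjt (h ▸ hiJ)
      simp [hiJ, this]
    · by_cases hijt : i = jt <;> simp [hiJ, hijt, hjt]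
  set T : Finset (Fin n) := (insert jt J)ᶜ with hT
  -- the key lemma
  have key : ∀ v : EuclideanSpace ℝ (Fin n), v ∈ LinearMap.ker A →
      wl1 A xstar ≤ wl1 A (xstar + v) ∧ (wl1 A (xstar + v) = wl1 A xstar → v = 0) := by
    intro v hv
    have hvJ : ∀ j ∈ J, v j = 0 := fun j hj => ker_coord_zero A hv (hJperp j hj)
    have hadd : ∀ i, (xstar + v) i = xstar i + v i := fun i => rfl
    -- split wl1 sums
    have hsplit : ∀ z : EuclideanSpace ℝ (Fin n),
        wl1 A z = wgt A jt * |z jt| + ∑ j ∈ J, wgt A j * |z j| + ∑ i ∈ T, wgt A i * |z i| := by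
      intro z
      rw [wl1, ← Finset.sum_add_sum_compl (insert jt J), Finset.sum_insert hjt, ← hT]
    have hws : wl1 A (xstar + v) = wgt A jt * |coef jt + v jt|
        + ∑ j ∈ J, wgt A j * |coef j| + ∑ i ∈ T, wgt A i * |v i| := by
      rw [hsplit]
      congr 1
      · congr 1
        · rw [hadd, hxs]
          simp [hjt]
        · apply Finset.sum_congr rfl
          intro j hj
          rw [hadd, hxs, hvJ j hj]
          have : j ≠ jt := fun h => hjt (h ▸ hj)
          simp [hj]
      · apply Finset.sum_congr rfl
        intro i hi
        rw [hT, Finset.mem_compl, Finset.mem_insert] at hi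
        push_neg at hi
        rw [hadd, hxs]
        simp [hi.1, hi.2]
    have hws' : wl1 A xstar = wgt A jt * |coef jt|
        + ∑ j ∈ J, wgt A j * |coef j| + 0 := by
      rw [hsplit]
      congr 1
      · congr 1
        · rw [hxs]; simp [hjt]
        · apply Finset.sum_congr rfl
          intro j hj
          rw [hxs]
          simp [hj]
      · apply Finset.sum_eq_zero
        intro i hi
        rw [hT, Finset.mem_compl, Finset.mem_insert] at hi
        push_neg at hi
        rw [hxs]
        simp [hi.1, hi.2]
    set S : ℝ := ∑ i ∈ T, wgt A i * |v i| with hS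
    -- the kernel relation
    set f : Fin n → EuclideanSpace ℝ (Fin n) := fun i => v i • proj A (stdBasis n i) with hf
    have hu : ∑ i ∈ T, f i = -(v jt • proj A (stdBasis n jt)) := by
      have h0 : (0 : EuclideanSpace ℝ (Fin n)) = ∑ i, f i := by
        rw [← proj_sum A v, proj_ker A hv]
      rw [← Finset.sum_add_sum_compl (insert jt J) f, Finset.sum_insert hjt, ← hT] at h0
      have hJ0 : ∑ j ∈ J, f j = 0 := by
        apply Finset.sum_eq_zero
        intro j hj
        rw [hf]
        simp [hvJ j hj]
      rw [hJ0, add_zero] at h0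
      rw [hf]
      linear_combination (norm := module) -h0
    have hnormf : ∀ i, ‖f i‖ = wgt A i * |v i| := by
      intro i
      rw [hf, norm_smul, Real.norm_eq_abs, wgt, mul_comm]
    have hnu : ‖∑ i ∈ T, f i‖ = wgt A jt * |v jt| := by
      rw [hu, norm_neg, norm_smul, Real.norm_eq_abs, wgt, mul_comm]
    have hSf : S = ∑ i ∈ T, ‖f i‖ := by
      rw [hS]
      exact Finset.sum_congr rfl fun i _ => (hnormf i).symm
    have hSge : wgt A jt * |v jt| ≤ S := by
      rw [hSf, ← hnu]
      exact norm_sum_le _ _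
    have habs : |coef jt| ≤ |coef jt + v jt| + |v jt| := by
      have := abs_add_le (coef jt + v jt) (-(v jt))
      simpa using this
    have hwjt : (0:ℝ) < wgt A jt := hw jt
    constructor
    · rw [hws, hws']
      nlinarith [hwjt, hSge, habs]
    · intro heq
      rw [hws, hws'] at heq
      have hSeq : S = wgt A jt * |v jt| := by
        nlinarith [hwjt, hSge, habs]
      -- show each coordinate of v vanishes
      by_cases hvjt : v jt = 0
      · have hS0 : S = 0 := by rw [hSeq, hvjt]; simp
        have hvT : ∀ i ∈ T, v i = 0 := by
          intro i hi
          have hz : ∀ i ∈ T, 0 ≤ wgt A i * |v i| :=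
            fun i _ => mul_nonneg (hw i).le (abs_nonneg _)
          have h0 : wgt A i * |v i| = 0 :=
            (Finset.sum_eq_zero_iff_of_nonneg hz).mp hS0 i hi
          rcases mul_eq_zero.mp h0 with h | h
          · exact absurd h (hw i).ne'
          · exact abs_eq_zero.mp h
        ext i
        by_cases hiJ : i ∈ J
        · exact hvJ i hiJ
        · by_cases hijt : i = jt
          · rw [hijt]; exact hvjt
          · exact hvT i (by rw [hT, Finset.mem_compl, Finset.mem_insert]; tauto)
      · exfalso
        have hnz : ∑ i ∈ T, f i ≠ 0 := by
          rw [hu]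
          simp only [ne_eq, neg_eq_zero, smul_eq_zero, not_or]
          refine ⟨hvjt, ?_⟩
          intro h
          exact absurd (by rw [wgt, h, norm_zero]) hwjt.ne'
        obtain ⟨i, hiT, hfi⟩ : ∃ i ∈ T, f i ≠ 0 := by
          by_contra hc
          push_neg at hc
          exact hnz (Finset.sum_eq_zero hc)
        have hray : SameRay ℝ (f i) (∑ j ∈ T, f j) :=
          sameRay_of_norm_sum_eq (by rw [← hSf, hSeq, hnu]) hiT
        obtain ⟨r, hr, hru⟩ := hray.exists_pos_left hfi hnz
        -- hru : r • f i = ∑ j in T, f j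
        rw [hu, hf] at hru
        have hij : jt ≠ i := by
          rw [hT, Finset.mem_compl, Finset.mem_insert] at hiT
          push_neg at hiT
          exact fun h => hiT.1 h.symm
        have h2 : (-(v jt))⁻¹ • ((r * v i) • A (proj A (stdBasis n i)))
            = A (stdBasis n jt) := by
          have h3 : (r * v i) • proj A (stdBasis n i) = (-(v jt)) • proj A (stdBasis n jt) := by
            rw [← smul_smul]
            rw [hru]
            module
          have h4 := congrArg A h3
          rw [map_smul, map_smul] at h4
          rw [h4, smul_smul, inv_mul_cancel₀ (neg_ne_zero.mpr hvjt), one_smul, A_proj]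
        rw [smul_smul, A_proj] at h2
        exact hNP jt i hij _ h2.symm
  refine ⟨?_, ?_⟩
  · intro x hxA
    have hv : x - xstar ∈ LinearMap.ker A := by
      rw [LinearMap.mem_ker, map_sub, hxA, sub_self]
    have := (key (x - xstar) hv).1
    rwa [add_sub_cancel] at this
  · intro y hyA hymin
    have hv : y - xstar ∈ LinearMap.ker A := by
      rw [LinearMap.mem_ker, map_sub, hyA, sub_self]
    have h1 : wl1 A y ≤ wl1 A xstar := hymin xstar rfl
    have h2 : wl1 A xstar ≤ wl1 A y := by
      have := (key (y - xstar) hv).1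
      rwa [add_sub_cancel] at this
    have h3 := (key (y - xstar) hv).2 (by rw [add_sub_cancel]; linarith)
    have := sub_eq_zero.mp h3
    exact this
end

section
/- Let x* ∈ ℝⁿ with support J = supp(x*). Suppose there exists a vector c ∈ ℝⁿ such that ⟨P e_i, c⟩ = ‖P e_i‖₂ · sgn(x*_i) for every i ∈ J and |⟨P e_i, c⟩| < ‖P e_i‖₂ for every i ∉ J. Then x* is the UNIQUE minimizer of the weighted ℓ1 norm ‖W x‖₁ = Σ_{i=1}^n w_i |x_i| subject to A x = A x* if and only if A is injective on the support of x*, i.e., the only q ∈ ℝⁿ with supp(q) ⊆ supp(x*) and A q = 0 is q = 0. -/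
open scoped RealInnerProductSpace Classical

lemma aux_dcoord {m n : ℕ} (A : EuclideanSpace ℝ (Fin n) →ₗ[ℝ] EuclideanSpace ℝ (Fin m))
    (c : EuclideanSpace ℝ (Fin n)) (i : Fin n) :
    ⟪proj A (stdBasis n i), c⟫ = proj A c i := by
  unfold proj stdBasis
  rw [← Submodule.starProjection_apply, Submodule.inner_starProjection_left_eq_right, EuclideanSpace.inner_single_left]
  simp

lemma aux_sum_dx {m n : ℕ} (A : EuclideanSpace ℝ (Fin n) →ₗ[ℝ] EuclideanSpace ℝ (Fin m))
    (c x : EuclideanSpace ℝ (Fin n)) :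
    ∑ i, ⟪proj A (stdBasis n i), c⟫ * x i = ⟪proj A x, c⟫ := by
  simp only [aux_dcoord]
  unfold proj
  rw [← Submodule.starProjection_apply (LinearMap.ker A)ᗮ x, Submodule.inner_starProjection_left_eq_right, PiLp.inner_apply]
  simp [mul_comm]

lemma aux_sum_d_ker {m n : ℕ} (A : EuclideanSpace ℝ (Fin n) →ₗ[ℝ] EuclideanSpace ℝ (Fin m))
    (c q : EuclideanSpace ℝ (Fin n)) (hq : A q = 0) :
    ∑ i, ⟪proj A (stdBasis n i), c⟫ * q i = 0 := by
  rw [aux_sum_dx]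
  unfold proj
  rw [Submodule.orthogonalProjectionOnto_apply_of_mem_orthogonal
    (Submodule.le_orthogonal_orthogonal _ hq)]
  simp

theorem stmt5 {m n : ℕ}
    (A : EuclideanSpace ℝ (Fin n) →ₗ[ℝ] EuclideanSpace ℝ (Fin m))
    (hA : ∀ i, stdBasis n i ∉ LinearMap.ker A)
    (xstar c : EuclideanSpace ℝ (Fin n))
    (hc1 : ∀ i, xstar i ≠ 0 →
      ⟪proj A (stdBasis n i), c⟫ = ‖proj A (stdBasis n i)‖ * Real.sign (xstar i))
    (hc2 : ∀ i, xstar i = 0 →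
      |⟪proj A (stdBasis n i), c⟫| < ‖proj A (stdBasis n i)‖)
 :
    ((∀ x : EuclideanSpace ℝ (Fin n), A x = A xstar → wl1 A xstar ≤ wl1 A x) ∧
      ∀ y : EuclideanSpace ℝ (Fin n), A y = A xstar →
        (∀ x : EuclideanSpace ℝ (Fin n), A x = A xstar → wl1 A y ≤ wl1 A x) → y = xstar) ↔
    (∀ q : EuclideanSpace ℝ (Fin n), (∀ i, q i ≠ 0 → xstar i ≠ 0) → A q = 0 → q = 0) := by
  set d : Fin n → ℝ := fun i => ⟪proj A (stdBasis n i), c⟫ with hd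
  -- basic facts
  have f1 : ∀ i, d i * xstar i = wgt A i * |xstar i| := by
    intro i
    by_cases h : xstar i = 0
    · simp [h]
    · simp only [hd]; rw [hc1 i h]
      rcases lt_trichotomy (xstar i) 0 with hlt | heq | hgt
      · rw [Real.sign_of_neg hlt, abs_of_neg hlt]; unfold wgt; ring
      · exact absurd heq h
      · rw [Real.sign_of_pos hgt, abs_of_pos hgt]; unfold wgt; ring
  have f2 : ∀ i, |d i| ≤ wgt A i := by
    intro i
    by_cases h : xstar i = 0
    · exact (hc2 i h).le
    · simp only [hd]; rw [hc1 i h, abs_mul, abs_norm]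
      rcases lt_trichotomy (xstar i) 0 with hlt | heq | hgt
      · rw [Real.sign_of_neg hlt]; simp [wgt]
      · exact absurd heq h
      · rw [Real.sign_of_pos hgt]; simp [wgt]
  have fker : ∀ q : EuclideanSpace ℝ (Fin n), A q = 0 → ∑ i, d i * q i = 0 := by
    intro q hq; exact aux_sum_d_ker A c q hq
  have fstar : ∑ i, d i * xstar i = wl1 A xstar := by
    unfold wl1; exact Finset.sum_congr rfl fun i _ => f1 i
  -- any feasible x has ∑ d x = wl1 xstar and wl1 xstar ≤ wl1 x
  have hsum_feas : ∀ x : EuclideanSpace ℝ (Fin n), A x = A xstar →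
      ∑ i, d i * x i = wl1 A xstar := by
    intro x hx
    have h0 : ∑ i, d i * (x i - xstar i) = 0 := by
      have hx0 : A (x - xstar) = 0 := by rw [map_sub, hx, sub_self]
      have := fker (x - xstar) hx0
      simpa using this
    have : ∑ i, d i * x i - ∑ i, d i * xstar i = 0 := by
      rw [← Finset.sum_sub_distrib]
      simpa [mul_sub] using h0
    linarith [fstar]
  have hterm_le : ∀ (x : EuclideanSpace ℝ (Fin n)) i, d i * x i ≤ wgt A i * |x i| := by
    intro x i
    calc d i * x i ≤ |d i * x i| := le_abs_self _
      _ = |d i| * |x i| := abs_mul _ _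
      _ ≤ wgt A i * |x i| := mul_le_mul_of_nonneg_right (f2 i) (abs_nonneg _)
  have hmin : ∀ x : EuclideanSpace ℝ (Fin n), A x = A xstar → wl1 A xstar ≤ wl1 A x := by
    intro x hx
    rw [← hsum_feas x hx]
    unfold wl1
    exact Finset.sum_le_sum fun i _ => hterm_le x i
  constructor
  · rintro ⟨-, huniq⟩ q hsupp hq
    by_contra hq0
    obtain ⟨i0, hi0⟩ : ∃ i, q i ≠ 0 := by
      by_contra h; push_neg at h
      exact hq0 (PiLp.ext (by simpa using h))
    set S : Finset (Fin n) := Finset.univ.filter (fun i => xstar i ≠ 0) with hS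
    have hSne : S.Nonempty := ⟨i0, by simp [hS, hsupp i0 hi0]⟩
    set t : ℝ := S.inf' hSne (fun i => |xstar i| / (|q i| + 1)) with ht
    have htpos : 0 < t := by
      rw [ht, Finset.lt_inf'_iff]
      intro i hi
      have : xstar i ≠ 0 := by simpa [hS] using hi
      exact div_pos (abs_pos.mpr this) (by positivity)
    have htsmall : ∀ i, xstar i ≠ 0 → t * |q i| < |xstar i| := by
      intro i hi
      have hmem : i ∈ S := by simp [hS, hi]
      have h1 : t ≤ |xstar i| / (|q i| + 1) := Finset.inf'_le _ hmem
      have h2 : t * (|q i| + 1) ≤ |xstar i| := by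
        rw [← div_mul_cancel₀ (|xstar i|) (show |q i| + 1 ≠ 0 by positivity)]
        exact mul_le_mul_of_nonneg_right h1 (by positivity)
      nlinarith [abs_nonneg (q i)]
    set y : EuclideanSpace ℝ (Fin n) := xstar + t • q with hy
    have hyapp : ∀ i, y i = xstar i + t * q i := by intro i; rfl
    have hyfeas : A y = A xstar := by rw [hy, map_add, map_smul, hq, smul_zero, add_zero]
    have hterm : ∀ i, wgt A i * |y i| = wgt A i * |xstar i| + t * (d i * q i) := by
      intro i
      by_cases hqi : q i = 0
      · rw [hyapp i, hqi]; ring_nf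
      · have hxi : xstar i ≠ 0 := hsupp i hqi
        have hdi : d i = wgt A i * Real.sign (xstar i) := hc1 i hxi
        have hts := htsmall i hxi
        have habs : |t * q i| ≤ t * |q i| := by rw [abs_mul, abs_of_pos htpos]
        rw [hyapp i, hdi]
        rcases lt_trichotomy (xstar i) 0 with hlt | heq | hgt
        · have hneg : xstar i + t * q i < 0 := by
            have := abs_of_neg hlt
            have := neg_abs_le (t * q i)
            have := le_abs_self (t * q i)
            nlinarith
          rw [abs_of_neg hneg, abs_of_neg hlt, Real.sign_of_neg hlt]; ring
        · exact absurd heq hxi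
        · have hpos : 0 < xstar i + t * q i := by
            have := abs_of_pos hgt
            have := neg_abs_le (t * q i)
            nlinarith
          rw [abs_of_pos hpos, abs_of_pos hgt, Real.sign_of_pos hgt]; ring
    have hwy : wl1 A y = wl1 A xstar := by
      unfold wl1
      rw [Finset.sum_congr rfl fun i _ => hterm i, Finset.sum_add_distrib]
      have : ∑ i, t * (d i * q i) = t * ∑ i, d i * q i := by rw [Finset.mul_sum]
      rw [this, fker q hq, mul_zero, add_zero]
    have : y = xstar := huniq y hyfeas (fun x hx => hwy ▸ hmin x hx)
    have : t • q = 0 := by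
      have h := this
      rw [hy] at h
      simpa using congrArg (fun z => z - xstar) h
    exact hq0 ((smul_eq_zero.mp this).resolve_left (ne_of_gt htpos))
  · intro hinj
    refine ⟨hmin, fun y hyfeas hymin => ?_⟩
    have heq : wl1 A y = wl1 A xstar := le_antisymm (hymin xstar rfl) (hmin y hyfeas)
    have hsum : ∑ i, d i * y i = ∑ i, wgt A i * |y i| := by
      rw [hsum_feas y hyfeas, ← heq]; rfl
    have hterm_eq : ∀ i, d i * y i = wgt A i * |y i| :=
      fun i => (Finset.sum_eq_sum_iff_of_le (fun i _ => hterm_le y i)).mp hsum i (Finset.mem_univ i)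
    have hsuppy : ∀ i, y i ≠ 0 → xstar i ≠ 0 := by
      intro i hyi
      by_contra hxi
      have h1 : |d i| < wgt A i := hc2 i hxi
      have h2 : wgt A i * |y i| = d i * y i := (hterm_eq i).symm
      have h3 : d i * y i ≤ |d i| * |y i| := by
        rw [← abs_mul]; exact le_abs_self _
      have h4 : |d i| * |y i| < wgt A i * |y i| :=
        mul_lt_mul_of_pos_right h1 (abs_pos.mpr hyi)
      linarith
    have : y - xstar = 0 := by
      apply hinj
      · intro i hi
        have hi' : y i - xstar i ≠ 0 := by simpa using hi
        by_contra hxi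
        have hyi : y i ≠ 0 := by rw [hxi, sub_zero] at hi'; exact hi'
        exact (hsuppy i hyi) hxi
      · rw [map_sub, hyfeas, sub_self]
    exact sub_eq_zero.mp this
end
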